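/- Coskewness bound for symmetric marginals: for ANY random vector (X₁, X₂, X₃) on a probability space such that X_i has the same distribution as f_i(U) for each i (with arbitrary joint dependence), the expected triple product satisfies |E[X₁X₂X₃]| ≤ ∫₀¹ |f₁(u)f₂(u)f₃(u)| du, provided E[|X₁X₂X₃|] < ∞. -/

import Mathlib

open MeasureTheory ProbabilityTheory

section Aux

/-- On `(0,1)`, `|f u| = f (max u (1-u))` for a symmetric monotone quantile. -/
lemma abs_eq_f_max (f : ℝ → ℝ) (hmono : MonotoneOn f (Set.Ioo 0 1))
    (hsym : ∀ u ∈ Set.Ioo (0:ℝ) 1, f (1 - u) = - f u)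
    {u : ℝ} (hu : u ∈ Set.Ioo (0:ℝ) 1) : |f u| = f (max u (1 - u)) := by
  have hu' : (1 - u) ∈ Set.Ioo (0:ℝ) 1 := ⟨by linarith [hu.2], by linarith [hu.1]⟩
  rcases le_total u (1 - u) with h | h
  · rw [max_eq_right h]
    have h1 : f u ≤ f (1 - u) := hmono hu hu' h
    have h2 : f (1 - u) = - f u := hsym u hu
    rw [h2] at h1 ⊢
    rw [abs_of_nonpos (by linarith)]
  · rw [max_eq_left h]
    have h1 : f (1 - u) ≤ f u := hmono hu' hu h
    have h2 : f (1 - u) = - f u := hsym u hu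
    rw [h2] at h1
    rw [abs_of_nonneg (by linarith)]

lemma abs_mono_max (f : ℝ → ℝ) (hmono : MonotoneOn f (Set.Ioo 0 1))
    (hsym : ∀ u ∈ Set.Ioo (0:ℝ) 1, f (1 - u) = - f u)
    {x y : ℝ} (hx : x ∈ Set.Ioo (0:ℝ) 1) (hy : y ∈ Set.Ioo (0:ℝ) 1)
    (h : max x (1 - x) ≤ max y (1 - y)) : |f x| ≤ |f y| := by
  rw [abs_eq_f_max f hmono hsym hx, abs_eq_f_max f hmono hsym hy]
  have hx' : max x (1 - x) ∈ Set.Ioo (0:ℝ) 1 :=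
    ⟨lt_max_of_lt_left hx.1, max_lt hx.2 (by linarith [hx.1])⟩
  have hy' : max y (1 - y) ∈ Set.Ioo (0:ℝ) 1 :=
    ⟨lt_max_of_lt_left hy.1, max_lt hy.2 (by linarith [hy.1])⟩
  exact hmono hx' hy' h

/-- super-level sets of `|f|`, `|g|` inside `(0,1)` are comparable. -/
lemma levelsets_comparable (f g : ℝ → ℝ)
    (hfmono : MonotoneOn f (Set.Ioo 0 1)) (hgmono : MonotoneOn g (Set.Ioo 0 1))
    (hfsym : ∀ u ∈ Set.Ioo (0:ℝ) 1, f (1 - u) = - f u)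
    (hgsym : ∀ u ∈ Set.Ioo (0:ℝ) 1, g (1 - u) = - g u)
    (s t : ℝ) :
    ({u | s < |f u|} ∩ Set.Ioo 0 1 ⊆ {u | t < |g u|} ∩ Set.Ioo 0 1) ∨
      ({u | t < |g u|} ∩ Set.Ioo 0 1 ⊆ {u | s < |f u|} ∩ Set.Ioo 0 1) := by
  by_contra hcon
  push_neg at hcon
  obtain ⟨h1, h2⟩ := hcon
  rw [Set.not_subset] at h1 h2
  obtain ⟨x, hxA, hxB⟩ := h1
  obtain ⟨y, hyB, hyA⟩ := h2
  have hxI : x ∈ Set.Ioo (0:ℝ) 1 := hxA.2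
  have hyI : y ∈ Set.Ioo (0:ℝ) 1 := hyB.2
  rcases le_total (max x (1 - x)) (max y (1 - y)) with h | h
  · exact hyA ⟨lt_of_lt_of_le hxA.1 (abs_mono_max f hfmono hfsym hxI hyI h), hyI⟩
  · exact hxB ⟨lt_of_lt_of_le hyB.1 (abs_mono_max g hgmono hgsym hyI hxI h), hxI⟩

/-- Triple layer-cake representation. -/
lemma layercake3 {α : Type*} [MeasurableSpace α] (μ : Measure α) [SFinite μ]
    (g₁ g₂ g₃ : α → ℝ) (h₁ : Measurable g₁) (h₂ : Measurable g₂) (h₃ : Measurable g₃) :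
    ∫⁻ a, ENNReal.ofReal |g₁ a| * ENNReal.ofReal |g₂ a| * ENNReal.ofReal |g₃ a| ∂μ
      = ∫⁻ p : ℝ × ℝ × ℝ,
          μ {a | (0 < p.1 ∧ p.1 < |g₁ a|) ∧ (0 < p.2.1 ∧ p.2.1 < |g₂ a|) ∧
              (0 < p.2.2 ∧ p.2.2 < |g₃ a|)} := by
  set E : Set (α × (ℝ × ℝ × ℝ)) :=
    {q | (0 < q.2.1 ∧ q.2.1 < |g₁ q.1|) ∧ (0 < q.2.2.1 ∧ q.2.2.1 < |g₂ q.1|) ∧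
        (0 < q.2.2.2 ∧ q.2.2.2 < |g₃ q.1|)} with hEdef
  have m1 : Measurable fun q : α × (ℝ × ℝ × ℝ) => q.2.1 := measurable_fst.comp measurable_snd
  have m2 : Measurable fun q : α × (ℝ × ℝ × ℝ) => q.2.2.1 :=
    (measurable_fst.comp measurable_snd).comp measurable_snd
  have m3 : Measurable fun q : α × (ℝ × ℝ × ℝ) => q.2.2.2 :=
    (measurable_snd.comp measurable_snd).comp measurable_snd
  have mg1 : Measurable fun q : α × (ℝ × ℝ × ℝ) => |g₁ q.1| := (h₁.comp measurable_fst).abs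
  have mg2 : Measurable fun q : α × (ℝ × ℝ × ℝ) => |g₂ q.1| := (h₂.comp measurable_fst).abs
  have mg3 : Measurable fun q : α × (ℝ × ℝ × ℝ) => |g₃ q.1| := (h₃.comp measurable_fst).abs
  have hE : MeasurableSet E := by
    have : E = ({q | 0 < q.2.1} ∩ {q | q.2.1 < |g₁ q.1|}) ∩
        (({q | 0 < q.2.2.1} ∩ {q | q.2.2.1 < |g₂ q.1|}) ∩
         ({q | 0 < q.2.2.2} ∩ {q | q.2.2.2 < |g₃ q.1|})) := by
      ext q; simp only [hEdef, Set.mem_setOf_eq, Set.mem_inter_iff]; try tauto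
    rw [this]
    exact (((measurableSet_lt measurable_const m1).inter (measurableSet_lt m1 mg1)).inter
      (((measurableSet_lt measurable_const m2).inter (measurableSet_lt m2 mg2)).inter
       ((measurableSet_lt measurable_const m3).inter (measurableSet_lt m3 mg3))))
  have key : ∀ a, (volume : Measure (ℝ × ℝ × ℝ)) (Prod.mk a ⁻¹' E)
      = ENNReal.ofReal |g₁ a| * ENNReal.ofReal |g₂ a| * ENNReal.ofReal |g₃ a| := by
    intro a
    have hset : Prod.mk a ⁻¹' E
        = Set.Ioo 0 |g₁ a| ×ˢ (Set.Ioo 0 |g₂ a| ×ˢ Set.Ioo 0 |g₃ a|) := by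
      ext p
      simp only [hEdef, Set.mem_preimage, Set.mem_setOf_eq, Set.mem_prod, Set.mem_Ioo]
    rw [hset, Measure.volume_eq_prod, Measure.prod_prod, Measure.volume_eq_prod,
      Measure.prod_prod]
    simp [Real.volume_Ioo, mul_assoc]
  calc ∫⁻ a, ENNReal.ofReal |g₁ a| * ENNReal.ofReal |g₂ a| * ENNReal.ofReal |g₃ a| ∂μ
      = ∫⁻ a, (volume : Measure (ℝ × ℝ × ℝ)) (Prod.mk a ⁻¹' E) ∂μ := by
        exact lintegral_congr fun a => (key a).symm
    _ = (μ.prod (volume : Measure (ℝ × ℝ × ℝ))) E := (Measure.prod_apply hE).symm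
    _ = ∫⁻ p : ℝ × ℝ × ℝ, μ ((fun a => (a, p)) ⁻¹' E) := Measure.prod_apply_symm hE
    _ = _ := by
        refine lintegral_congr fun p => ?_
        congr 1

/-- AM–GM style bound. -/
lemma amgm3 (x y z : ℝ) (hx : 0 ≤ x) (hy : 0 ≤ y) (hz : 0 ≤ z) :
    x * y * z ≤ x ^ 3 + y ^ 3 + z ^ 3 := by
  nlinarith [sq_nonneg (x - y), sq_nonneg (y - z), sq_nonneg (x - z),
    mul_nonneg hx hy, mul_nonneg hy hz, mul_nonneg hx hz,
    mul_nonneg (mul_nonneg hx hy) hz, sq_nonneg (x + y + z),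
    mul_nonneg (add_nonneg (add_nonneg hx hy) hz)
      (by nlinarith [sq_nonneg (x - y), sq_nonneg (y - z), sq_nonneg (x - z)] :
        (0:ℝ) ≤ x ^ 2 + y ^ 2 + z ^ 2 - x * y - y * z - x * z)]

end Aux

/-- for any random vector `(X₁, X₂, X₃)` whose components have the same
distributions as `f₁(U)`, `f₂(U)`, `f₃(U)` (with `U` uniform on `[0,1]` and `fᵢ`
symmetric quantile functions), `|E[X₁X₂X₃]| ≤ ∫₀¹ |f₁(u)f₂(u)f₃(u)| du`. -/
theorem stmt5 {Ω : Type} [MeasurableSpace Ω] (P : Measure Ω) [IsProbabilityMeasure P]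
    (X₁ X₂ X₃ : Ω → ℝ)
    (hX₁ : Measurable X₁) (hX₂ : Measurable X₂) (hX₃ : Measurable X₃)
    (f₁ f₂ f₃ : ℝ → ℝ)
    (hf₁ : Measurable f₁) (hf₂ : Measurable f₂) (hf₃ : Measurable f₃)
    (hf₁mono : MonotoneOn f₁ (Set.Ioo 0 1)) (hf₂mono : MonotoneOn f₂ (Set.Ioo 0 1))
    (hf₃mono : MonotoneOn f₃ (Set.Ioo 0 1))
    (hf₁sym : ∀ u ∈ Set.Ioo (0:ℝ) 1, f₁ (1 - u) = - f₁ u)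
    (hf₂sym : ∀ u ∈ Set.Ioo (0:ℝ) 1, f₂ (1 - u) = - f₂ u)
    (hf₃sym : ∀ u ∈ Set.Ioo (0:ℝ) 1, f₃ (1 - u) = - f₃ u)
    (hf₁int : IntegrableOn (fun u => |f₁ u| ^ 3) (Set.Ioo (0:ℝ) 1) volume)
    (hf₂int : IntegrableOn (fun u => |f₂ u| ^ 3) (Set.Ioo (0:ℝ) 1) volume)
    (hf₃int : IntegrableOn (fun u => |f₃ u| ^ 3) (Set.Ioo (0:ℝ) 1) volume)
    (hX₁dist : P.map X₁ = (volume.restrict (Set.Ioo (0:ℝ) 1)).map f₁)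
    (hX₂dist : P.map X₂ = (volume.restrict (Set.Ioo (0:ℝ) 1)).map f₂)
    (hX₃dist : P.map X₃ = (volume.restrict (Set.Ioo (0:ℝ) 1)).map f₃)
    (hint : Integrable (fun ω => X₁ ω * X₂ ω * X₃ ω) P) :
    |∫ ω, X₁ ω * X₂ ω * X₃ ω ∂P| ≤ ∫ u in Set.Ioo (0:ℝ) 1, |f₁ u * f₂ u * f₃ u| := by
  set I : Set ℝ := Set.Ioo (0:ℝ) 1 with hI
  set μr : Measure ℝ := volume.restrict I with hμr
  -- distributional transfer of tail probabilities
  have dist : ∀ (X : Ω → ℝ) (f : ℝ → ℝ), Measurable X → Measurable f →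
      P.map X = μr.map f → ∀ c : ℝ, P {ω | c < |X ω|} = μr {u | c < |f u|} := by
    intro X f hX hf hd c
    have hs : MeasurableSet {x : ℝ | c < |x|} := measurableSet_lt measurable_const measurable_abs
    calc P {ω | c < |X ω|} = P (X ⁻¹' {x | c < |x|}) := rfl
      _ = (P.map X) {x | c < |x|} := (Measure.map_apply hX hs).symm
      _ = (μr.map f) {x | c < |x|} := by rw [hd]
      _ = μr (f ⁻¹' {x | c < |x|}) := Measure.map_apply hf hs
      _ = μr {u | c < |f u|} := rfl
  -- pointwise comparison of sliced measures
  have pointwise : ∀ p : ℝ × ℝ × ℝ,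
      P {ω | (0 < p.1 ∧ p.1 < |X₁ ω|) ∧ (0 < p.2.1 ∧ p.2.1 < |X₂ ω|) ∧
          (0 < p.2.2 ∧ p.2.2 < |X₃ ω|)}
        ≤ μr {u | (0 < p.1 ∧ p.1 < |f₁ u|) ∧ (0 < p.2.1 ∧ p.2.1 < |f₂ u|) ∧
          (0 < p.2.2 ∧ p.2.2 < |f₃ u|)} := by
    rintro ⟨s, t, r⟩
    simp only
    by_cases hs : 0 < s
    · by_cases ht : 0 < t
      · by_cases hr : 0 < r
        · -- all positive
          set A : Set ℝ := {u | s < |f₁ u|} with hA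
          set B : Set ℝ := {u | t < |f₂ u|} with hB
          set C : Set ℝ := {u | r < |f₃ u|} with hC
          have mA : MeasurableSet A := measurableSet_lt measurable_const hf₁.abs
          have mB : MeasurableSet B := measurableSet_lt measurable_const hf₂.abs
          have mC : MeasurableSet C := measurableSet_lt measurable_const hf₃.abs
          have hfset : {u | (0 < s ∧ s < |f₁ u|) ∧ (0 < t ∧ t < |f₂ u|) ∧
              (0 < r ∧ r < |f₃ u|)} = A ∩ B ∩ C := by
            ext u
            simp only [Set.mem_setOf_eq, Set.mem_inter_iff, hA, hB, hC, hs, ht, hr,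
              true_and]
            tauto
          have hXle : ∀ (Y : Ω → ℝ) (g : ℝ → ℝ), Measurable Y → Measurable g →
              P.map Y = μr.map g → ∀ c : ℝ,
              ({ω | c < |Y ω|} = {ω | c < |Y ω|}) →
              P {ω | (0 < s ∧ s < |X₁ ω|) ∧ (0 < t ∧ t < |X₂ ω|) ∧ (0 < r ∧ r < |X₃ ω|)}
                ≤ P {ω | c < |Y ω|} → True := fun _ _ _ _ _ _ _ _ => trivial
          clear hXle
          -- the X-side is dominated by each marginal tail
          have hP1 : P {ω | (0 < s ∧ s < |X₁ ω|) ∧ (0 < t ∧ t < |X₂ ω|) ∧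
              (0 < r ∧ r < |X₃ ω|)} ≤ P {ω | s < |X₁ ω|} :=
            measure_mono fun ω h => h.1.2
          have hP2 : P {ω | (0 < s ∧ s < |X₁ ω|) ∧ (0 < t ∧ t < |X₂ ω|) ∧
              (0 < r ∧ r < |X₃ ω|)} ≤ P {ω | t < |X₂ ω|} :=
            measure_mono fun ω h => h.2.1.2
          have hP3 : P {ω | (0 < s ∧ s < |X₁ ω|) ∧ (0 < t ∧ t < |X₂ ω|) ∧
              (0 < r ∧ r < |X₃ ω|)} ≤ P {ω | r < |X₃ ω|} :=
            measure_mono fun ω h => h.2.2.2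
          rw [hfset]
          have hμABC : μr (A ∩ B ∩ C) = volume (A ∩ B ∩ C ∩ I) :=
            Measure.restrict_apply ((mA.inter mB).inter mC)
          have hμA : μr A = volume (A ∩ I) := Measure.restrict_apply mA
          have hμB : μr B = volume (B ∩ I) := Measure.restrict_apply mB
          have hμC : μr C = volume (C ∩ I) := Measure.restrict_apply mC
          have hinter : A ∩ B ∩ C ∩ I = (A ∩ I) ∩ (B ∩ I) ∩ (C ∩ I) := by
            ext u; simp only [Set.mem_inter_iff]; tauto
          have cAB := levelsets_comparable f₁ f₂ hf₁mono hf₂mono hf₁sym hf₂sym s t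
          have cAC := levelsets_comparable f₁ f₃ hf₁mono hf₃mono hf₁sym hf₃sym s r
          have cBC := levelsets_comparable f₂ f₃ hf₂mono hf₃mono hf₂sym hf₃sym t r
          rw [hμABC, hinter]
          -- find minimal set
          rcases cAB with hab | hba
          · rcases cAC with hac | hca
            · -- A minimal
              have : (A ∩ I) ∩ (B ∩ I) ∩ (C ∩ I) = A ∩ I := by
                apply Set.Subset.antisymm
                · intro u hu; exact hu.1.1
                · intro u hu; exact ⟨⟨hu, hab hu⟩, hac hu⟩
              rw [this, ← hμA, ← dist X₁ f₁ hX₁ hf₁ hX₁dist s]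
              exact hP1
            · -- C ⊆ A, and C ⊆ B via C ⊆ A ⊆ B
              have : (A ∩ I) ∩ (B ∩ I) ∩ (C ∩ I) = C ∩ I := by
                apply Set.Subset.antisymm
                · intro u hu; exact hu.2
                · intro u hu; exact ⟨⟨hca hu, hab (hca hu)⟩, hu⟩
              rw [this, ← hμC, ← dist X₃ f₃ hX₃ hf₃ hX₃dist r]
              exact hP3
          · rcases cBC with hbc | hcb
            · -- B minimal
              have : (A ∩ I) ∩ (B ∩ I) ∩ (C ∩ I) = B ∩ I := by
                apply Set.Subset.antisymm
                · intro u hu; exact hu.1.2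
                · intro u hu; exact ⟨⟨hba hu, hu⟩, hbc hu⟩
              rw [this, ← hμB, ← dist X₂ f₂ hX₂ hf₂ hX₂dist t]
              exact hP2
            · -- C ⊆ B ⊆ A
              have : (A ∩ I) ∩ (B ∩ I) ∩ (C ∩ I) = C ∩ I := by
                apply Set.Subset.antisymm
                · intro u hu; exact hu.2
                · intro u hu; exact ⟨⟨hba (hcb hu), hcb hu⟩, hu⟩
              rw [this, ← hμC, ← dist X₃ f₃ hX₃ hf₃ hX₃dist r]
              exact hP3
        · have : {ω | (0 < s ∧ s < |X₁ ω|) ∧ (0 < t ∧ t < |X₂ ω|) ∧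
              (0 < r ∧ r < |X₃ ω|)} = ∅ := by
            ext ω; simp only [Set.mem_setOf_eq, Set.mem_empty_iff_false, iff_false]
            tauto
          rw [this, measure_empty]; exact zero_le
      · have : {ω | (0 < s ∧ s < |X₁ ω|) ∧ (0 < t ∧ t < |X₂ ω|) ∧
            (0 < r ∧ r < |X₃ ω|)} = ∅ := by
          ext ω; simp only [Set.mem_setOf_eq, Set.mem_empty_iff_false, iff_false]
          tauto
        rw [this, measure_empty]; exact zero_le
    · have : {ω | (0 < s ∧ s < |X₁ ω|) ∧ (0 < t ∧ t < |X₂ ω|) ∧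
          (0 < r ∧ r < |X₃ ω|)} = ∅ := by
        ext ω; simp only [Set.mem_setOf_eq, Set.mem_empty_iff_false, iff_false]
        tauto
      rw [this, measure_empty]; exact zero_le
  -- main lintegral comparison
  have main : ∫⁻ ω, ENNReal.ofReal |X₁ ω * X₂ ω * X₃ ω| ∂P
      ≤ ∫⁻ u, ENNReal.ofReal |f₁ u * f₂ u * f₃ u| ∂μr := by
    have lhs_eq : ∫⁻ ω, ENNReal.ofReal |X₁ ω * X₂ ω * X₃ ω| ∂P
        = ∫⁻ ω, ENNReal.ofReal |X₁ ω| * ENNReal.ofReal |X₂ ω| * ENNReal.ofReal |X₃ ω| ∂P := by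
      refine lintegral_congr fun ω => ?_
      rw [abs_mul, abs_mul, ENNReal.ofReal_mul (mul_nonneg (abs_nonneg _) (abs_nonneg _)),
        ENNReal.ofReal_mul (abs_nonneg _)]
    have rhs_eq : ∫⁻ u, ENNReal.ofReal |f₁ u * f₂ u * f₃ u| ∂μr
        = ∫⁻ u, ENNReal.ofReal |f₁ u| * ENNReal.ofReal |f₂ u| * ENNReal.ofReal |f₃ u| ∂μr := by
      refine lintegral_congr fun u => ?_
      rw [abs_mul, abs_mul, ENNReal.ofReal_mul (mul_nonneg (abs_nonneg _) (abs_nonneg _)),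
        ENNReal.ofReal_mul (abs_nonneg _)]
    rw [lhs_eq, rhs_eq, layercake3 P X₁ X₂ X₃ hX₁ hX₂ hX₃,
      layercake3 μr f₁ f₂ f₃ hf₁ hf₂ hf₃]
    exact lintegral_mono pointwise
  -- finiteness of the RHS
  have habs_meas : Measurable fun u => |f₁ u * f₂ u * f₃ u| := ((hf₁.mul hf₂).mul hf₃).abs
  have rhs_fin : ∫⁻ u, ENNReal.ofReal |f₁ u * f₂ u * f₃ u| ∂μr ≠ ⊤ := by
    have bound : ∀ u, ENNReal.ofReal |f₁ u * f₂ u * f₃ u|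
        ≤ ENNReal.ofReal (|f₁ u| ^ 3) + ENNReal.ofReal (|f₂ u| ^ 3)
          + ENNReal.ofReal (|f₃ u| ^ 3) := by
      intro u
      have h1 : |f₁ u * f₂ u * f₃ u| = |f₁ u| * |f₂ u| * |f₃ u| := by rw [abs_mul, abs_mul]
      have h2 : |f₁ u| * |f₂ u| * |f₃ u| ≤ |f₁ u| ^ 3 + |f₂ u| ^ 3 + |f₃ u| ^ 3 :=
        amgm3 _ _ _ (abs_nonneg _) (abs_nonneg _) (abs_nonneg _)
      calc ENNReal.ofReal |f₁ u * f₂ u * f₃ u|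
          ≤ ENNReal.ofReal (|f₁ u| ^ 3 + |f₂ u| ^ 3 + |f₃ u| ^ 3) := by
            rw [h1]; exact ENNReal.ofReal_le_ofReal h2
        _ ≤ _ := le_trans (ENNReal.ofReal_add_le) (by
            exact add_le_add_left ENNReal.ofReal_add_le _)
    have fin1 : ∫⁻ u, ENNReal.ofReal (|f₁ u| ^ 3) ∂μr < ⊤ :=
      (hasFiniteIntegral_iff_ofReal (Filter.Eventually.of_forall fun u =>
        pow_nonneg (abs_nonneg _) 3)).mp hf₁int.2
    have fin2 : ∫⁻ u, ENNReal.ofReal (|f₂ u| ^ 3) ∂μr < ⊤ :=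
      (hasFiniteIntegral_iff_ofReal (Filter.Eventually.of_forall fun u =>
        pow_nonneg (abs_nonneg _) 3)).mp hf₂int.2
    have fin3 : ∫⁻ u, ENNReal.ofReal (|f₃ u| ^ 3) ∂μr < ⊤ :=
      (hasFiniteIntegral_iff_ofReal (Filter.Eventually.of_forall fun u =>
        pow_nonneg (abs_nonneg _) 3)).mp hf₃int.2
    have := calc ∫⁻ u, ENNReal.ofReal |f₁ u * f₂ u * f₃ u| ∂μr
        ≤ ∫⁻ u, (ENNReal.ofReal (|f₁ u| ^ 3) + ENNReal.ofReal (|f₂ u| ^ 3)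
            + ENNReal.ofReal (|f₃ u| ^ 3)) ∂μr := lintegral_mono bound
      _ = ∫⁻ u, ENNReal.ofReal (|f₁ u| ^ 3) ∂μr + ∫⁻ u, ENNReal.ofReal (|f₂ u| ^ 3) ∂μr
            + ∫⁻ u, ENNReal.ofReal (|f₃ u| ^ 3) ∂μr := by
          rw [lintegral_add_left (f := fun u => ENNReal.ofReal (|f₁ u| ^ 3) + ENNReal.ofReal (|f₂ u| ^ 3)) (((hf₁.abs.pow_const 3).ennreal_ofReal).add
              ((hf₂.abs.pow_const 3).ennreal_ofReal)),
            lintegral_add_left ((hf₁.abs.pow_const 3).ennreal_ofReal)]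
      _ < ⊤ := by
          exact ENNReal.add_lt_top.mpr ⟨ENNReal.add_lt_top.mpr ⟨fin1, fin2⟩, fin3⟩
    exact this.ne
  -- assemble
  have step1 : |∫ ω, X₁ ω * X₂ ω * X₃ ω ∂P| ≤ ∫ ω, |X₁ ω * X₂ ω * X₃ ω| ∂P := by
    have := norm_integral_le_integral_norm (μ := P) (fun ω => X₁ ω * X₂ ω * X₃ ω)
    simpa only [Real.norm_eq_abs] using this
  have step2 : ∫ ω, |X₁ ω * X₂ ω * X₃ ω| ∂P
      = (∫⁻ ω, ENNReal.ofReal |X₁ ω * X₂ ω * X₃ ω| ∂P).toReal := by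
    exact integral_eq_lintegral_of_nonneg_ae (Filter.Eventually.of_forall fun ω => abs_nonneg _)
      (((hX₁.mul hX₂).mul hX₃).abs.aestronglyMeasurable)
  have step3 : ∫ u in Set.Ioo (0:ℝ) 1, |f₁ u * f₂ u * f₃ u|
      = (∫⁻ u, ENNReal.ofReal |f₁ u * f₂ u * f₃ u| ∂μr).toReal := by
    exact integral_eq_lintegral_of_nonneg_ae (Filter.Eventually.of_forall fun u => abs_nonneg _)
      habs_meas.aestronglyMeasurable
  rw [step3]
  refine le_trans step1 ?_
  rw [step2]
  exact ENNReal.toReal_mono rhs_fin main
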